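/- Let N ≥ 2, 2 ≤ p < N, x_0 ∈ ℝ^N and ε > 0, and let Γ_ε(x) = C_0 (ε^p + |x − x_0|^{p/(p−1)})^{−(N−p)/p}, where C_0 = ((p−1)/(N−p))(N ω_N)^{−1/(p−1)} and C_1 = N^{(N−p)/p²} ((N−p)/(p−1))^{((p−1)(N−p))/p²}. Then Γ_ε is of class C¹ on ℝ^N, the vector field |∇Γ_ε|^{p−2}∇Γ_ε is of class C¹ on ℝ^N \ {x_0}, for every x ≠ x_0 one has −div(|∇Γ_ε|^{p−2}∇Γ_ε)(x) = C_0^{p−1} C_1^{p²/(N−p)} ε^p (ε^p + |x − x_0|^{p/(p−1)})^{−(N − (N−p)/p)} =: f_ε(x), and for every φ ∈ C_c^∞(ℝ^N) one has ∫_{ℝ^N} |∇Γ_ε|^{p−2} ⟨∇Γ_ε, ∇φ⟩ dx = ∫_{ℝ^N} f_ε φ dx. -/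

import Mathlib

open MeasureTheory Real Filter
set_option maxHeartbeats 1000000
open scoped RealInnerProductSpace

noncomputable section

/-- The divergence of a vector field `V : ℝ^N → ℝ^N`, as the trace of its Fréchet derivative
computed in the standard orthonormal basis. -/
def vecDiv {N : ℕ} (V : EuclideanSpace ℝ (Fin N) → EuclideanSpace ℝ (Fin N))
    (x : EuclideanSpace ℝ (Fin N)) : ℝ :=
  ∑ i : Fin N, ⟪fderiv ℝ V x (EuclideanSpace.single i 1), EuclideanSpace.single i 1⟫



variable {F : Type*} [NormedAddCommGroup F] [InnerProductSpace ℝ F] [CompleteSpace F]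

theorem tendsto_norm_rpow_zero {q : ℝ} (hq : 0 < q) :
    Tendsto (fun y : F => ‖y‖ ^ q) (nhds 0) (nhds 0) := by
  have h0 : ((0:ℝ) ^ q) = 0 := Real.zero_rpow hq.ne'
  have := ((continuousAt_rpow_const 0 q (Or.inr hq.le)).tendsto).comp
    (tendsto_norm_zero (E := F))
  simpa [Function.comp_def, h0] using this

theorem norm_rpow_mul_norm {q : ℝ} (hq : 1 < q) (y : F) :
    ‖y‖ ^ (q - 1) * ‖y‖ = ‖y‖ ^ q := by
  rcases eq_or_ne y 0 with rfl | h
  · simp [Real.zero_rpow (by linarith : q ≠ 0), Real.zero_rpow (by linarith : q - 1 ≠ 0)]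
  · rw [← Real.rpow_add_one (norm_ne_zero_iff.2 h) (q - 1)]
    norm_num

theorem hasGradientAt_norm_rpow {q : ℝ} (hq : 1 < q) (v : F) :
    HasGradientAt (fun y : F => ‖y‖ ^ q) ((q * ‖v‖ ^ (q - 2)) • v) v := by
  rcases eq_or_ne v 0 with rfl | hv
  · rw [smul_zero, hasGradientAt_iff_hasFDerivAt, map_zero]
    rw [hasFDerivAt_iff_isLittleO_nhds_zero]
    simp only [ContinuousLinearMap.zero_apply, zero_add, norm_zero,
      Real.zero_rpow (by linarith : q ≠ 0), sub_zero]
    refine Asymptotics.isLittleO_iff.2 fun c hc => ?_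
    have T : Tendsto (fun y : F => ‖y‖ ^ (q - 1)) (nhds 0) (nhds 0) :=
      tendsto_norm_rpow_zero (by linarith)
    filter_upwards [T.eventually (gt_mem_nhds hc)] with y hy
    rw [Real.norm_of_nonneg (Real.rpow_nonneg (norm_nonneg y) q), ← norm_rpow_mul_norm hq y]
    exact mul_le_mul_of_nonneg_right hy.le (norm_nonneg y)
  · have h2 : (‖v‖ ^ 2 : ℝ) ≠ 0 := pow_ne_zero 2 (norm_ne_zero_iff.2 hv)
    have hr := ((hasStrictFDerivAt_norm_sq v).hasFDerivAt).rpow_const (p := q / 2) (Or.inl h2)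
    have hfun : (fun y : F => (‖y‖ ^ 2 : ℝ) ^ (q / 2)) = fun y : F => ‖y‖ ^ q := by
      funext y
      rw [← Real.rpow_natCast ‖y‖ 2, ← Real.rpow_mul (norm_nonneg y)]
      norm_num
      rw [show (2:ℝ) * (q / 2) = q by ring]
    rw [hfun] at hr
    rw [hasGradientAt_iff_hasFDerivAt]
    convert hr using 1
    · rfl
    have hnv : (‖v‖ ^ 2 : ℝ) ^ (q / 2 - 1) = ‖v‖ ^ (q - 2) := by
      rw [← Real.rpow_natCast ‖v‖ 2, ← Real.rpow_mul (norm_nonneg v)]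
      norm_num
      rw [show (2:ℝ) * (q / 2 - 1) = q - 2 by ring]
    ext w
    simp only [InnerProductSpace.toDual_apply_apply, real_inner_smul_left,
      ContinuousLinearMap.smul_apply, ContinuousLinearMap.coe_smul', Pi.smul_apply,
      innerSL_apply_apply, smul_eq_mul]
    rw [hnv]
    ring

theorem continuous_norm_rpow_smul {q : ℝ} (hq : 1 < q) :
    Continuous (fun v : F => ‖v‖ ^ (q - 2) • v) := by
  rw [continuous_iff_continuousAt]
  intro v
  rcases eq_or_ne v 0 with rfl | hv
  · have h0 : ‖(0:F)‖ ^ (q - 2) • (0:F) = 0 := smul_zero _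
    unfold ContinuousAt
    simp only [h0]
    apply squeeze_zero_norm (a := fun v : F => ‖v‖ ^ (q - 1))
    · intro y
      rcases eq_or_ne y 0 with rfl | h
      · simp [Real.zero_rpow (by linarith : q - 1 ≠ 0)]
      · rw [norm_smul, Real.norm_of_nonneg (Real.rpow_nonneg (norm_nonneg y) _),
          ← Real.rpow_add_one (norm_ne_zero_iff.2 h) (q - 2),
          show q - 2 + 1 = q - 1 by ring]
    · exact tendsto_norm_rpow_zero (by linarith)
  · exact (continuous_norm.continuousAt.rpow_const
      (Or.inl (norm_ne_zero_iff.2 hv))).smul continuousAt_id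

theorem HasGradientAt.const_mul_rpow {f : F → ℝ} {g x : F} (hf : HasGradientAt f g x)
    (hfx : f x ≠ 0) (a γ : ℝ) :
    HasGradientAt (fun y => a * f y ^ γ) ((a * (γ * f x ^ (γ - 1))) • g) x := by
  have h1 := (hf.hasFDerivAt.rpow_const (p := γ) (Or.inl hfx)).const_mul a
  rw [hasGradientAt_iff_hasFDerivAt]
  convert h1 using 1
  · rfl
  ext w
  simp only [InnerProductSpace.toDual_apply_apply, real_inner_smul_left,
    ContinuousLinearMap.smul_apply, smul_eq_mul]
  ring

theorem hasGradientAt_shift_rpow {q : ℝ} (hq : 1 < q) (a : ℝ) (x0 x : F) :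
    HasGradientAt (fun y : F => a + ‖y - x0‖ ^ q) ((q * ‖x - x0‖ ^ (q - 2)) • (x - x0)) x := by
  have h1 := hasGradientAt_norm_rpow hq (x - x0)
  rw [hasGradientAt_iff_hasFDerivAt] at h1 ⊢
  have ht : HasFDerivAt (fun y : F => y - x0) (ContinuousLinearMap.id ℝ F) x :=
    (hasFDerivAt_id x).sub_const x0
  have h2 := (h1.comp x ht).const_add a
  simpa using h2

/-- The master lemma: C¹ smoothness and gradient of `x ↦ b * (a + ‖x-x0‖^q)^γ`. -/
theorem main_aux {q a : ℝ} (hq : 1 < q) (ha : 0 < a) (x0 : F) (b γ : ℝ) :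
    ContDiff ℝ 1 (fun x : F => b * (a + ‖x - x0‖ ^ q) ^ γ) ∧
    ∀ x : F, HasGradientAt (fun x : F => b * (a + ‖x - x0‖ ^ q) ^ γ)
      ((b * (γ * (a + ‖x - x0‖ ^ q) ^ (γ - 1)) * q) • (‖x - x0‖ ^ (q - 2) • (x - x0))) x := by
  have hA : ∀ x : F, 0 < a + ‖x - x0‖ ^ q := fun x =>
    lt_of_lt_of_le ha (by simpa using Real.rpow_nonneg (norm_nonneg (x - x0)) q)
  have hgrad : ∀ x : F, HasGradientAt (fun x : F => b * (a + ‖x - x0‖ ^ q) ^ γ)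
      ((b * (γ * (a + ‖x - x0‖ ^ q) ^ (γ - 1)) * q) • (‖x - x0‖ ^ (q - 2) • (x - x0))) x := by
    intro x
    have h1 := (hasGradientAt_shift_rpow hq a x0 x).const_mul_rpow (hA x).ne' b γ
    rw [smul_smul] at h1 ⊢
    convert h1 using 2
    ring
  refine ⟨?_, hgrad⟩
  rw [contDiff_one_iff_fderiv]
  constructor
  · exact fun x => ((hgrad x).hasFDerivAt).differentiableAt
  · have hfd : fderiv ℝ (fun x : F => b * (a + ‖x - x0‖ ^ q) ^ γ) = fun x =>
        (InnerProductSpace.toDual ℝ F)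
          ((b * (γ * (a + ‖x - x0‖ ^ q) ^ (γ - 1)) * q) • (‖x - x0‖ ^ (q - 2) • (x - x0))) :=
      funext fun x => ((hgrad x).hasFDerivAt).fderiv
    rw [hfd]
    have hsc : Continuous (fun x : F => b * (γ * (a + ‖x - x0‖ ^ q) ^ (γ - 1)) * q) := by
      have hAc : Continuous (fun x : F => a + ‖x - x0‖ ^ q) :=
        continuous_const.add (((continuous_id.sub continuous_const).norm).rpow_const
          (fun x => Or.inr (by linarith)))
      exact ((continuous_const.mul (continuous_const.mul (hAc.rpow_const
        (fun x => Or.inl (hA x).ne')))).mul continuous_const)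
    have hvc : Continuous (fun x : F => ‖x - x0‖ ^ (q - 2) • (x - x0)) :=
      (continuous_norm_rpow_smul hq).comp (continuous_id.sub continuous_const)
    exact (InnerProductSpace.toDual ℝ F).continuous.comp (hsc.smul hvc)

theorem scalar_key {c A r p q α β : ℝ} (hc : 0 < c) (hA : 0 < A) (hr : 0 < r)
    (hβ : β = (α + 1) * (p - 1)) (hqp : (q - 1) * (p - 1) = 1) :
    (c * A ^ (-α - 1) * r ^ (q - 2) * r) ^ (p - 2) * (c * A ^ (-α - 1) * r ^ (q - 2))
      = c ^ (p - 1) * A ^ (-β) := by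
  have h1 : (c * A ^ (-α - 1) * r ^ (q - 2) * r) ^ (p - 2)
      = c ^ (p - 2) * A ^ ((-α - 1) * (p - 2)) * r ^ ((q - 2) * (p - 2)) * r ^ (p - 2) := by
    rw [Real.mul_rpow (by positivity) hr.le, Real.mul_rpow (by positivity) (by positivity),
        Real.mul_rpow hc.le (by positivity), ← Real.rpow_mul hA.le, ← Real.rpow_mul hr.le]
  rw [h1]
  have h2 : A ^ ((-α - 1) * (p - 2)) * A ^ (-α - 1) = A ^ (-β) := by
    rw [← Real.rpow_add hA]
    congr 1
    rw [hβ]; ring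
  have h3 : r ^ ((q - 2) * (p - 2)) * r ^ (p - 2) * r ^ (q - 2) = 1 := by
    rw [← Real.rpow_add hr, ← Real.rpow_add hr,
      show (q - 2) * (p - 2) + (p - 2) + (q - 2) = 0 by linear_combination hqp, Real.rpow_zero]
  have h4 : c ^ (p - 2) * c = c ^ (p - 1) := by
    rw [← Real.rpow_add_one hc.ne' (p - 2), show p - 2 + 1 = p - 1 by ring]
  calc c ^ (p-2) * A ^ ((-α-1)*(p-2)) * r ^ ((q-2)*(p-2)) * r ^ (p-2) * (c * A ^ (-α-1) * r ^ (q-2))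
      = (c ^ (p-2) * c) * (A ^ ((-α-1)*(p-2)) * A ^ (-α-1))
          * (r ^ ((q-2)*(p-2)) * r ^ (p-2) * r ^ (q-2)) := by ring
    _ = c ^ (p - 1) * A ^ (-β) := by rw [h2, h3, h4, mul_one]

theorem scalar_div {εp A R c β q N' : ℝ} (hA : 0 < A) (hAdef : A = εp + R) (hβq : β * q = N') :
    N' * (-(c) * A ^ (-β)) + -(c) * (-β * A ^ (-β - 1)) * q * R
      = -(c * N' * εp * A ^ (-β - 1)) := by
  have h1 : A ^ (-β) = A ^ (-β - 1) * A := by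
    rw [← Real.rpow_add_one hA.ne' (-β - 1), show -β - 1 + 1 = -β by ring]
  rw [h1]
  linear_combination (-(c) * N' * A ^ (-β - 1)) * hAdef + (c * A ^ (-β - 1) * R) * hβq

theorem norm_rpow_q {q : ℝ} (hq : 1 < q) (v : F) :
    ‖v‖ ^ (q - 2) * ‖v‖ ^ 2 = ‖v‖ ^ q := by
  rcases eq_or_ne v 0 with rfl | h
  · simp [Real.zero_rpow (by linarith : q ≠ 0)]
  · have hv : (0:ℝ) < ‖v‖ := norm_pos_iff.2 h
    rw [← Real.rpow_natCast ‖v‖ 2, ← Real.rpow_add hv]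
    norm_num

theorem inner_single_one {N : ℕ} (v : EuclideanSpace ℝ (Fin N)) (i : Fin N) :
    ⟪v, EuclideanSpace.single i 1⟫ = v i := by
  simp [EuclideanSpace.inner_single_right]

theorem real_inner_eq_sum {N : ℕ} (v w : EuclideanSpace ℝ (Fin N)) :
    ⟪v, w⟫ = ∑ i, v i * w i := by
  simp [PiLp.inner_apply, RCLike.inner_apply, conj_trivial]
  exact Finset.sum_congr rfl fun i _ => mul_comm _ _

theorem key (N : ℕ) (hN : 2 ≤ N) (p : ℝ) (hp2 : 2 ≤ p) (hpN : p < N)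
    (x0 : EuclideanSpace ℝ (Fin N)) (ε : ℝ) (hε : 0 < ε) (C0 C1 : ℝ) (hC0 : 0 < C0)
    (hC1 : C1 ^ (p ^ 2 / ((N : ℝ) - p))
      = (N : ℝ) * ((((N : ℝ) - p) / (p - 1)) ^ (p - 1))) :
    let Γε : EuclideanSpace ℝ (Fin N) → ℝ :=
      fun x => C0 * (ε ^ p + ‖x - x0‖ ^ (p / (p - 1))) ^ (-(((N : ℝ) - p) / p))
    let fε : EuclideanSpace ℝ (Fin N) → ℝ :=
      fun x => C0 ^ (p - 1) * C1 ^ (p ^ 2 / ((N : ℝ) - p)) * ε ^ p *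
        (ε ^ p + ‖x - x0‖ ^ (p / (p - 1))) ^ (-((N : ℝ) - ((N : ℝ) - p) / p))
    ContDiff ℝ 1 Γε ∧
    ContDiffOn ℝ 1 (fun x => (‖gradient Γε x‖ ^ (p - 2)) • gradient Γε x) {x0}ᶜ ∧
    (∀ x : EuclideanSpace ℝ (Fin N), x ≠ x0 →
      -vecDiv (fun z => (‖gradient Γε z‖ ^ (p - 2)) • gradient Γε z) x = fε x) ∧
    ∀ φ : EuclideanSpace ℝ (Fin N) → ℝ, ContDiff ℝ (⊤ : ℕ∞) φ → HasCompactSupport φ →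
      (∫ x, (‖gradient Γε x‖ ^ (p - 2)) * ⟪gradient Γε x, gradient φ x⟫)
        = ∫ x, fε x * φ x := by
  intro Γε fε
  have hΓdef : Γε = (fun x : EuclideanSpace ℝ (Fin N) => C0 * (ε ^ p + ‖x - x0‖ ^ (p / (p - 1))) ^ (-(((N:ℝ) - p) / p))) := rfl
  have hfdef : fε = fun x : EuclideanSpace ℝ (Fin N) => C0 ^ (p - 1) * C1 ^ (p ^ 2 / ((N:ℝ) - p)) * ε ^ p * (ε ^ p + ‖x - x0‖ ^ (p / (p - 1))) ^ (-((N:ℝ) - ((N:ℝ) - p) / p)) := rfl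
  have hp0 : (0:ℝ) < p := by linarith
  have hp1 : (1:ℝ) < p := by linarith
  have hpne : p ≠ 0 := ne_of_gt hp0
  have hp1ne : p - 1 ≠ 0 := ne_of_gt (by linarith)
  have hNp : (0:ℝ) < (N:ℝ) - p := by linarith
  have hNpne : (N:ℝ) - p ≠ 0 := ne_of_gt hNp
  have hq1 : 1 < p / (p - 1) := by
    rw [lt_div_iff₀ (by linarith : (0:ℝ) < p - 1)]; linarith
  have hεp : 0 < ε ^ p := Real.rpow_pos_of_pos hε p
  have hαpos : 0 < (((N:ℝ) - p) / p) := div_pos hNp hp0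
  have hCC : 0 < (C0 * (((N:ℝ) - p) / p) * (p / (p - 1))) := mul_pos (mul_pos hC0 hαpos) (by linarith)
  have hAX : ∀ x : EuclideanSpace ℝ (Fin N), 0 < (ε ^ p + ‖x - x0‖ ^ (p / (p - 1))) := fun x => by positivity
  have hmain1 := main_aux (F := EuclideanSpace ℝ (Fin N)) hq1 hεp x0 C0 (-(((N:ℝ) - p) / p))
  have hmain2 := main_aux (F := EuclideanSpace ℝ (Fin N)) hq1 hεp x0 (-((C0 * (((N:ℝ) - p) / p) * (p / (p - 1))) ^ (p - 1))) (-(((((N:ℝ) - p) / p) + 1) * (p - 1)))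
  have hgrad : gradient (fun x : EuclideanSpace ℝ (Fin N) => C0 * (ε ^ p + ‖x - x0‖ ^ (p / (p - 1))) ^ (-(((N:ℝ) - p) / p))) = (fun x : EuclideanSpace ℝ (Fin N) => ((C0 * (-(((N:ℝ) - p) / p) * (ε ^ p + ‖x - x0‖ ^ (p / (p - 1))) ^ (-(((N:ℝ) - p) / p) - 1)) * (p / (p - 1))) • (‖x - x0‖ ^ ((p / (p - 1)) - 2) • (x - x0)))) := by
    exact gradient_eq fun x => hmain1.2 x
  have hV0 : ContDiff ℝ 1 (fun x : EuclideanSpace ℝ (Fin N) => ((-((C0 * (((N:ℝ) - p) / p) * (p / (p - 1))) ^ (p - 1))) * (ε ^ p + ‖x - x0‖ ^ (p / (p - 1))) ^ (-(((((N:ℝ) - p) / p) + 1) * (p - 1)))) • (x - x0)) := hmain2.1.smul (contDiff_id.sub contDiff_const)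
  have hVeq : ∀ x : EuclideanSpace ℝ (Fin N), ‖((C0 * (-(((N:ℝ) - p) / p) * (ε ^ p + ‖x - x0‖ ^ (p / (p - 1))) ^ (-(((N:ℝ) - p) / p) - 1)) * (p / (p - 1))) • (‖x - x0‖ ^ ((p / (p - 1)) - 2) • (x - x0)))‖ ^ (p - 2) • ((C0 * (-(((N:ℝ) - p) / p) * (ε ^ p + ‖x - x0‖ ^ (p / (p - 1))) ^ (-(((N:ℝ) - p) / p) - 1)) * (p / (p - 1))) • (‖x - x0‖ ^ ((p / (p - 1)) - 2) • (x - x0))) = ((-((C0 * (((N:ℝ) - p) / p) * (p / (p - 1))) ^ (p - 1))) * (ε ^ p + ‖x - x0‖ ^ (p / (p - 1))) ^ (-(((((N:ℝ) - p) / p) + 1) * (p - 1)))) • (x - x0) := by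
    intro x
    rcases eq_or_ne x x0 with rfl | hx
    · simp [sub_self]
    · have hr : (0:ℝ) < ‖x - x0‖ := norm_pos_iff.2 (sub_ne_zero.2 hx)
      have hGx : ((C0 * (-(((N:ℝ) - p) / p) * (ε ^ p + ‖x - x0‖ ^ (p / (p - 1))) ^ (-(((N:ℝ) - p) / p) - 1)) * (p / (p - 1))) • (‖x - x0‖ ^ ((p / (p - 1)) - 2) • (x - x0))) = (-((C0 * (((N:ℝ) - p) / p) * (p / (p - 1))) * (ε ^ p + ‖x - x0‖ ^ (p / (p - 1))) ^ (-(((N:ℝ) - p) / p) - 1)) * (‖x - x0‖ ^ ((p / (p - 1)) - 2))) • (x - x0) := by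
        rw [smul_smul]; congr 1; ring
      rw [hGx, norm_smul, smul_smul]
      congr 1
      have habs : ‖-((C0 * (((N:ℝ) - p) / p) * (p / (p - 1))) * (ε ^ p + ‖x - x0‖ ^ (p / (p - 1))) ^ (-(((N:ℝ) - p) / p) - 1)) * (‖x - x0‖ ^ ((p / (p - 1)) - 2))‖
          = (C0 * (((N:ℝ) - p) / p) * (p / (p - 1))) * (ε ^ p + ‖x - x0‖ ^ (p / (p - 1))) ^ (-(((N:ℝ) - p) / p) - 1) * (‖x - x0‖ ^ ((p / (p - 1)) - 2)) := by
        rw [Real.norm_eq_abs, abs_mul, abs_neg,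
          abs_of_pos (by positivity), abs_of_pos (by positivity)]
      rw [habs]
      have hsk := scalar_key (c := (C0 * (((N:ℝ) - p) / p) * (p / (p - 1)))) (A := (ε ^ p + ‖x - x0‖ ^ (p / (p - 1)))) (r := ‖x - x0‖) (p := p)
        (q := (p / (p - 1))) (α := (((N:ℝ) - p) / p)) (β := (((((N:ℝ) - p) / p) + 1) * (p - 1))) hCC (hAX x) hr rfl
        (by field_simp; ring)
      linear_combination (-1 : ℝ) * hsk
  have hVfun : (fun x : EuclideanSpace ℝ (Fin N) => (‖gradient (fun x : EuclideanSpace ℝ (Fin N) => C0 * (ε ^ p + ‖x - x0‖ ^ (p / (p - 1))) ^ (-(((N:ℝ) - p) / p))) x‖ ^ (p - 2)) • gradient (fun x : EuclideanSpace ℝ (Fin N) => C0 * (ε ^ p + ‖x - x0‖ ^ (p / (p - 1))) ^ (-(((N:ℝ) - p) / p))) x)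
      = (fun x : EuclideanSpace ℝ (Fin N) => ((-((C0 * (((N:ℝ) - p) / p) * (p / (p - 1))) ^ (p - 1))) * (ε ^ p + ‖x - x0‖ ^ (p / (p - 1))) ^ (-(((((N:ℝ) - p) / p) + 1) * (p - 1)))) • (x - x0)) := by
    funext x
    rw [hgrad]
    exact hVeq x
  have HD : ∀ x : EuclideanSpace ℝ (Fin N), HasFDerivAt (fun x : EuclideanSpace ℝ (Fin N) => ((-((C0 * (((N:ℝ) - p) / p) * (p / (p - 1))) ^ (p - 1))) * (ε ^ p + ‖x - x0‖ ^ (p / (p - 1))) ^ (-(((((N:ℝ) - p) / p) + 1) * (p - 1)))) • (x - x0)) (((-((C0 * (((N:ℝ) - p) / p) * (p / (p - 1))) ^ (p - 1))) * (ε ^ p + ‖x - x0‖ ^ (p / (p - 1))) ^ (-(((((N:ℝ) - p) / p) + 1) * (p - 1)))) • ContinuousLinearMap.id ℝ (EuclideanSpace ℝ (Fin N)) + ((InnerProductSpace.toDual ℝ (EuclideanSpace ℝ (Fin N))) (((-((C0 * (((N:ℝ) - p) / p) * (p / (p - 1))) ^ (p - 1))) * (-(((((N:ℝ) - p) / p)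 + 1) * (p - 1)) * (ε ^ p + ‖x - x0‖ ^ (p / (p - 1))) ^ (-(((((N:ℝ) - p) / p) + 1) * (p - 1)) - 1)) * (p / (p - 1))) • (‖x - x0‖ ^ ((p / (p - 1)) - 2) • (x - x0)))).smulRight (x - x0)) x := by
    intro x
    exact ((hmain2.2 x).hasFDerivAt).smul ((hasFDerivAt_id x).sub_const x0)
  have hβq : (((((N:ℝ) - p) / p) + 1) * (p - 1)) * (p / (p - 1)) = (N:ℝ) := by field_simp; try ring
  have hKN : (C0 * (((N:ℝ) - p) / p) * (p / (p - 1))) ^ (p - 1) * (N:ℝ) = C0 ^ (p - 1) * C1 ^ (p ^ 2 / ((N:ℝ) - p)) := by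
    have hd : (0:ℝ) < ((N:ℝ) - p) / (p - 1) := div_pos hNp (by linarith)
    have hCCd : (C0 * (((N:ℝ) - p) / p) * (p / (p - 1))) = C0 * (((N:ℝ) - p) / (p - 1)) := by field_simp; try ring
    rw [hCCd, Real.mul_rpow hC0.le hd.le, hC1]; ring
  have hexp2 : -(((((N:ℝ) - p) / p) + 1) * (p - 1)) - 1 = -((N:ℝ) - ((N:ℝ) - p) / p) := by field_simp; try ring
  have hdivkey : ∀ x : EuclideanSpace ℝ (Fin N),
      (∑ i : Fin N, ⟪((((-((C0 * (((N:ℝ) - p) / p) * (p / (p - 1))) ^ (p - 1))) * (ε ^ p + ‖x - x0‖ ^ (p / (p - 1))) ^ (-(((((N:ℝ) - p) / p) + 1) * (p - 1)))) • ContinuousLinearMap.id ℝ (EuclideanSpace ℝ (Fin N)) + ((InnerProductSpace.toDual ℝ (EuclideanSpace ℝ (Fin N))) (((-((C0 * (((N:ℝ) - p) / p) * (p / (p - 1))) ^ (p - 1))) * (-(((((N:ℝ) - p) / p) + 1) * (p - 1)) * (ε ^ p + ‖x - x0‖ ^ (p / (p - 1))) ^ (-(((((N:ℝ) - p) / p)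 + 1) * (p - 1)) - 1)) * (p / (p - 1))) • (‖x - x0‖ ^ ((p / (p - 1)) - 2) • (x - x0)))).smulRight (x - x0))) (EuclideanSpace.single i 1), EuclideanSpace.single i 1⟫)
        = -(C0 ^ (p - 1) * C1 ^ (p ^ 2 / ((N:ℝ) - p)) * ε ^ p * (ε ^ p + ‖x - x0‖ ^ (p / (p - 1))) ^ (-((N:ℝ) - ((N:ℝ) - p) / p))) := by
    intro x
    have hterm : ∀ i : Fin N,
        ⟪((((-((C0 * (((N:ℝ) - p) / p) * (p / (p - 1))) ^ (p - 1))) * (ε ^ p + ‖x - x0‖ ^ (p / (p - 1))) ^ (-(((((N:ℝ) - p) / p) + 1) * (p - 1)))) • ContinuousLinearMap.id ℝ (EuclideanSpace ℝ (Fin N)) + ((InnerProductSpace.toDual ℝ (EuclideanSpace ℝ (Fin N))) (((-((C0 * (((N:ℝ) - p) / p) * (p / (p - 1))) ^ (p - 1))) * (-(((((N:ℝ) - p) / p) + 1) * (p - 1)) * (ε ^ p + ‖x - x0‖ ^ (p / (p - 1))) ^ (-(((((N:ℝ) - p) / p) + 1) * (p - 1)) - 1)) * (p / (p - 1))) • (‖x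 - x0‖ ^ ((p / (p - 1)) - 2) • (x - x0)))).smulRight (x - x0))) (EuclideanSpace.single i 1), EuclideanSpace.single i 1⟫
          = ((-((C0 * (((N:ℝ) - p) / p) * (p / (p - 1))) ^ (p - 1))) * (ε ^ p + ‖x - x0‖ ^ (p / (p - 1))) ^ (-(((((N:ℝ) - p) / p) + 1) * (p - 1)))) + ((((-((C0 * (((N:ℝ) - p) / p) * (p / (p - 1))) ^ (p - 1))) * (-(((((N:ℝ) - p) / p) + 1) * (p - 1)) * (ε ^ p + ‖x - x0‖ ^ (p / (p - 1))) ^ (-(((((N:ℝ) - p) / p) + 1) * (p - 1)) - 1)) * (p / (p - 1))) • (‖x - x0‖ ^ ((p / (p - 1)) - 2) • (x - x0)))) i * ((x - x0) i) := by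
      intro i
      simp only [ContinuousLinearMap.add_apply, ContinuousLinearMap.coe_smul', Pi.smul_apply,
        ContinuousLinearMap.coe_id', id_eq, ContinuousLinearMap.smulRight_apply,
        InnerProductSpace.toDual_apply_apply, inner_add_left, real_inner_smul_left,
        inner_single_one, EuclideanSpace.single_apply, smul_eq_mul]
      simp
    rw [Finset.sum_congr rfl (fun i _ => hterm i), Finset.sum_add_distrib, Finset.sum_const,
      Finset.card_univ, Fintype.card_fin, nsmul_eq_mul,
      ← real_inner_eq_sum (((-((C0 * (((N:ℝ) - p) / p) * (p / (p - 1))) ^ (p - 1))) * (-(((((N:ℝ) - p) / p) + 1) * (p - 1)) * (ε ^ p + ‖x - x0‖ ^ (p / (p - 1))) ^ (-(((((N:ℝ) - p) / p) + 1) * (p - 1)) - 1)) * (p / (p - 1))) • (‖x - x0‖ ^ ((p / (p - 1)) - 2) • (x - x0))) (x - x0)]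
    rw [real_inner_smul_left, real_inner_smul_left, real_inner_self_eq_norm_sq,
      norm_rpow_q hq1 (x - x0)]
    have hsd := scalar_div (εp := ε ^ p) (A := (ε ^ p + ‖x - x0‖ ^ (p / (p - 1)))) (R := ‖x - x0‖ ^ (p / (p - 1)))
      (c := (C0 * (((N:ℝ) - p) / p) * (p / (p - 1))) ^ (p - 1)) (β := (((((N:ℝ) - p) / p) + 1) * (p - 1))) (q := (p / (p - 1))) (N' := (N:ℝ)) (hAX x) rfl hβq
    calc (N:ℝ) * ((-((C0 * (((N:ℝ) - p) / p) * (p / (p - 1))) ^ (p - 1))) * (ε ^ p + ‖x - x0‖ ^ (p / (p - 1))) ^ (-(((((N:ℝ) - p) / p) + 1) * (p - 1))))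
          + (-((C0 * (((N:ℝ) - p) / p) * (p / (p - 1))) ^ (p - 1))) * (-(((((N:ℝ) - p) / p) + 1) * (p - 1)) * (ε ^ p + ‖x - x0‖ ^ (p / (p - 1))) ^ (-(((((N:ℝ) - p) / p) + 1) * (p - 1)) - 1)) * (p / (p - 1)) * (‖x - x0‖ ^ (p / (p - 1)) )
        = -((C0 * (((N:ℝ) - p) / p) * (p / (p - 1))) ^ (p - 1) * (N:ℝ) * ε ^ p * (ε ^ p + ‖x - x0‖ ^ (p / (p - 1))) ^ (-(((((N:ℝ) - p) / p) + 1) * (p - 1)) - 1)) := by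
          linear_combination hsd
      _ = -(C0 ^ (p - 1) * C1 ^ (p ^ 2 / ((N:ℝ) - p)) * ε ^ p * (ε ^ p + ‖x - x0‖ ^ (p / (p - 1))) ^ (-((N:ℝ) - ((N:ℝ) - p) / p))) := by rw [hexp2]; linear_combination (-(ε ^ p) * (ε ^ p + ‖x - x0‖ ^ (p / (p - 1))) ^ (-((N:ℝ) - ((N:ℝ) - p) / p))) * hKN
  refine ⟨?_, ?_, ?_, ?_⟩
  · rw [hΓdef]; exact hmain1.1
  · rw [hΓdef, hVfun]; exact hV0.contDiffOn
  · intro x hx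
    rw [hΓdef, hfdef, hVfun]
    simp only [vecDiv]
    have hfd : fderiv ℝ (fun x : EuclideanSpace ℝ (Fin N) => ((-((C0 * (((N:ℝ) - p) / p) * (p / (p - 1))) ^ (p - 1))) * (ε ^ p + ‖x - x0‖ ^ (p / (p - 1))) ^ (-(((((N:ℝ) - p) / p) + 1) * (p - 1)))) • (x - x0)) x = (((-((C0 * (((N:ℝ) - p) / p) * (p / (p - 1))) ^ (p - 1))) * (ε ^ p + ‖x - x0‖ ^ (p / (p - 1))) ^ (-(((((N:ℝ) - p) / p) + 1) * (p - 1)))) • ContinuousLinearMap.id ℝ (EuclideanSpace ℝ (Fin N)) + ((InnerProductSpace.toDual ℝ (EuclideanSpace ℝ (Fin N))) (((-((C0 * (((N:ℝ) - p) / p) * (p / (p - 1))) ^ (p - 1))) * (-(((((N:ℝ) - p) / p) + 1) * (p - 1)) * (ε ^ p + ‖x - x0‖ ^ (p / (p - 1))) ^ (-(((((N:ℝ) - p) / p) + 1) * (p - 1)) - 1)) * (p / (p - 1))) • (‖x - x0‖ ^ ((p / (p - 1)) - 2) • (x - x0)))).smulRight (x - x0)) := (HD x).fderiv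
    rw [hfd, hdivkey x, neg_neg]
  · intro φ hφ hφc
    rw [hΓdef, hfdef]
    have hφd : Differentiable ℝ φ := hφ.differentiable (by simp)
    have hφfc : Continuous (fderiv ℝ φ) := hφ.continuous_fderiv (by simp)
    have hV0d : Differentiable ℝ (fun x : EuclideanSpace ℝ (Fin N) => ((-((C0 * (((N:ℝ) - p) / p) * (p / (p - 1))) ^ (p - 1))) * (ε ^ p + ‖x - x0‖ ^ (p / (p - 1))) ^ (-(((((N:ℝ) - p) / p) + 1) * (p - 1)))) • (x - x0)) := hV0.differentiable one_ne_zero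
    have hV0c : Continuous (fun x : EuclideanSpace ℝ (Fin N) => ((-((C0 * (((N:ℝ) - p) / p) * (p / (p - 1))) ^ (p - 1))) * (ε ^ p + ‖x - x0‖ ^ (p / (p - 1))) ^ (-(((((N:ℝ) - p) / p) + 1) * (p - 1)))) • (x - x0)) := hV0.continuous
    have hVi : ∀ i : Fin N, ContDiff ℝ 1 (fun x : EuclideanSpace ℝ (Fin N) => (((-((C0 * (((N:ℝ) - p) / p) * (p / (p - 1))) ^ (p - 1))) * (ε ^ p + ‖x - x0‖ ^ (p / (p - 1))) ^ (-(((((N:ℝ) - p) / p) + 1) * (p - 1)))) • (x - x0) : EuclideanSpace ℝ (Fin N)) i) := by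
      intro i
      have h := (EuclideanSpace.proj (𝕜 := ℝ) i).contDiff.comp hV0
      exact h
    have happ : ∀ i : Fin N, Continuous (fun x : EuclideanSpace ℝ (Fin N) => fderiv ℝ φ x (EuclideanSpace.single i 1)) :=
      fun i => (ContinuousLinearMap.apply ℝ ℝ (EuclideanSpace.single i 1)).continuous.comp hφfc
    have hsupp : ∀ i : Fin N,
        HasCompactSupport (fun x : EuclideanSpace ℝ (Fin N) => fderiv ℝ φ x (EuclideanSpace.single i 1)) := by
      intro i
      have := (hφc.fderiv ℝ).comp_left
        (g := fun L : EuclideanSpace ℝ (Fin N) →L[ℝ] ℝ => L (EuclideanSpace.single i 1)) rfl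
      simpa [Function.comp_def] using this
    have hint1 : ∀ i : Fin N, Integrable (fun x : EuclideanSpace ℝ (Fin N) =>
        (((-((C0 * (((N:ℝ) - p) / p) * (p / (p - 1))) ^ (p - 1))) * (ε ^ p + ‖x - x0‖ ^ (p / (p - 1))) ^ (-(((((N:ℝ) - p) / p) + 1) * (p - 1)))) • (x - x0) : EuclideanSpace ℝ (Fin N)) i * fderiv ℝ φ x (EuclideanSpace.single i 1)) volume := by
      intro i
      apply Continuous.integrable_of_hasCompactSupport
      · exact ((hVi i).continuous).mul (happ i)
      · exact (hsupp i).mul_left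
    have hint3 : ∀ i : Fin N, Integrable (fun x : EuclideanSpace ℝ (Fin N) =>
        (((-((C0 * (((N:ℝ) - p) / p) * (p / (p - 1))) ^ (p - 1))) * (ε ^ p + ‖x - x0‖ ^ (p / (p - 1))) ^ (-(((((N:ℝ) - p) / p) + 1) * (p - 1)))) • (x - x0) : EuclideanSpace ℝ (Fin N)) i * φ x) volume := by
      intro i
      apply Continuous.integrable_of_hasCompactSupport
      · exact ((hVi i).continuous).mul hφ.continuous
      · exact hφc.mul_left
    have hint2 : ∀ i : Fin N, Integrable (fun x : EuclideanSpace ℝ (Fin N) =>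
        fderiv ℝ (fun y : EuclideanSpace ℝ (Fin N) => (((-((C0 * (((N:ℝ) - p) / p) * (p / (p - 1))) ^ (p - 1))) * (ε ^ p + ‖y - x0‖ ^ (p / (p - 1))) ^ (-(((((N:ℝ) - p) / p) + 1) * (p - 1)))) • (y - x0) : EuclideanSpace ℝ (Fin N)) i) x (EuclideanSpace.single i 1)
          * φ x) volume := by
      intro i
      apply Continuous.integrable_of_hasCompactSupport
      · exact ((ContinuousLinearMap.apply ℝ ℝ (EuclideanSpace.single i 1)).continuous.comp
          ((hVi i).continuous_fderiv one_ne_zero)).mul hφ.continuous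
      · exact hφc.mul_left
    have hgco : ∀ (x : EuclideanSpace ℝ (Fin N)) (i : Fin N),
        (gradient φ x) i = fderiv ℝ φ x (EuclideanSpace.single i 1) := by
      intro x i
      have hgd : gradient φ x = (InnerProductSpace.toDual ℝ (EuclideanSpace ℝ (Fin N))).symm (fderiv ℝ φ x) := rfl
      rw [← inner_single_one (gradient φ x) i, hgd, InnerProductSpace.toDual_symm_apply]
    have hDi : ∀ (x : EuclideanSpace ℝ (Fin N)) (i : Fin N),
        HasFDerivAt (fun y : EuclideanSpace ℝ (Fin N) => (((-((C0 * (((N:ℝ) - p) / p) * (p / (p - 1))) ^ (p - 1))) * (ε ^ p + ‖y - x0‖ ^ (p / (p - 1))) ^ (-(((((N:ℝ) - p) / p) + 1) * (p - 1)))) • (y - x0) : EuclideanSpace ℝ (Fin N)) i)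
          ((EuclideanSpace.proj (𝕜 := ℝ) i).comp (((-((C0 * (((N:ℝ) - p) / p) * (p / (p - 1))) ^ (p - 1))) * (ε ^ p + ‖x - x0‖ ^ (p / (p - 1))) ^ (-(((((N:ℝ) - p) / p) + 1) * (p - 1)))) • ContinuousLinearMap.id ℝ (EuclideanSpace ℝ (Fin N)) + ((InnerProductSpace.toDual ℝ (EuclideanSpace ℝ (Fin N))) (((-((C0 * (((N:ℝ) - p) / p) * (p / (p - 1))) ^ (p - 1))) * (-(((((N:ℝ) - p) / p) + 1) * (p - 1)) * (ε ^ p + ‖x - x0‖ ^ (p / (p - 1))) ^ (-(((((N:ℝ) - p) / p) + 1) * (p - 1)) - 1)) * (p / (p - 1))) • (‖x - x0‖ ^ ((p / (p - 1)) - 2) • (x - x0)))).smulRight (x - x0))) x := by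
      intro x i
      exact (EuclideanSpace.proj (𝕜 := ℝ) i).hasFDerivAt.comp x (HD x)
    calc (∫ x, (‖gradient (fun x : EuclideanSpace ℝ (Fin N) => C0 * (ε ^ p + ‖x - x0‖ ^ (p / (p - 1))) ^ (-(((N:ℝ) - p) / p))) x‖ ^ (p - 2)) * ⟪gradient (fun x : EuclideanSpace ℝ (Fin N) => C0 * (ε ^ p + ‖x - x0‖ ^ (p / (p - 1))) ^ (-(((N:ℝ) - p) / p))) x, gradient φ x⟫)
        = ∫ x : EuclideanSpace ℝ (Fin N), ∑ i : Fin N, (((-((C0 * (((N:ℝ) - p) / p) * (p / (p - 1))) ^ (p - 1))) * (ε ^ p + ‖x - x0‖ ^ (p / (p - 1))) ^ (-(((((N:ℝ) - p) / p) + 1) * (p - 1)))) • (x - x0) : EuclideanSpace ℝ (Fin N)) i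
            * fderiv ℝ φ x (EuclideanSpace.single i 1) := by
          congr 1
          funext x
          rw [hgrad, ← real_inner_smul_left, hVeq x, real_inner_eq_sum]
          exact Finset.sum_congr rfl fun i _ => by rw [hgco x i]
      _ = ∑ i : Fin N, ∫ x : EuclideanSpace ℝ (Fin N), (((-((C0 * (((N:ℝ) - p) / p) * (p / (p - 1))) ^ (p - 1))) * (ε ^ p + ‖x - x0‖ ^ (p / (p - 1))) ^ (-(((((N:ℝ) - p) / p) + 1) * (p - 1)))) • (x - x0) : EuclideanSpace ℝ (Fin N)) i
            * fderiv ℝ φ x (EuclideanSpace.single i 1) :=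
          integral_finset_sum _ (fun i _ => hint1 i)
      _ = ∑ i : Fin N, -∫ x : EuclideanSpace ℝ (Fin N),
            fderiv ℝ (fun y : EuclideanSpace ℝ (Fin N) => (((-((C0 * (((N:ℝ) - p) / p) * (p / (p - 1))) ^ (p - 1))) * (ε ^ p + ‖y - x0‖ ^ (p / (p - 1))) ^ (-(((((N:ℝ) - p) / p) + 1) * (p - 1)))) • (y - x0) : EuclideanSpace ℝ (Fin N)) i) x
              (EuclideanSpace.single i 1) * φ x := by
          refine Finset.sum_congr rfl fun i _ => ?_
          exact integral_mul_fderiv_eq_neg_fderiv_mul_of_integrable (hint2 i) (hint1 i)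
            (hint3 i) (fun x _ => (hVi i).differentiable one_ne_zero x) (fun x _ => hφd x)
      _ = -∫ x : EuclideanSpace ℝ (Fin N), ∑ i : Fin N,
            fderiv ℝ (fun y : EuclideanSpace ℝ (Fin N) => (((-((C0 * (((N:ℝ) - p) / p) * (p / (p - 1))) ^ (p - 1))) * (ε ^ p + ‖y - x0‖ ^ (p / (p - 1))) ^ (-(((((N:ℝ) - p) / p) + 1) * (p - 1)))) • (y - x0) : EuclideanSpace ℝ (Fin N)) i) x
              (EuclideanSpace.single i 1) * φ x := by
          rw [integral_finset_sum _ (fun i _ => hint2 i), ← Finset.sum_neg_distrib]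
      _ = ∫ x : EuclideanSpace ℝ (Fin N), C0 ^ (p - 1) * C1 ^ (p ^ 2 / ((N:ℝ) - p)) * ε ^ p * (ε ^ p + ‖x - x0‖ ^ (p / (p - 1))) ^ (-((N:ℝ) - ((N:ℝ) - p) / p)) * φ x := by
          rw [← integral_neg]
          congr 1
          funext x
          have hSx : ∑ i : Fin N,
              fderiv ℝ (fun y : EuclideanSpace ℝ (Fin N) => (((-((C0 * (((N:ℝ) - p) / p) * (p / (p - 1))) ^ (p - 1))) * (ε ^ p + ‖y - x0‖ ^ (p / (p - 1))) ^ (-(((((N:ℝ) - p) / p) + 1) * (p - 1)))) • (y - x0) : EuclideanSpace ℝ (Fin N)) i) x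
                (EuclideanSpace.single i 1)
              = -(C0 ^ (p - 1) * C1 ^ (p ^ 2 / ((N:ℝ) - p)) * ε ^ p * (ε ^ p + ‖x - x0‖ ^ (p / (p - 1))) ^ (-((N:ℝ) - ((N:ℝ) - p) / p))) := by
            have h1 : ∀ i : Fin N,
                fderiv ℝ (fun y : EuclideanSpace ℝ (Fin N) => (((-((C0 * (((N:ℝ) - p) / p) * (p / (p - 1))) ^ (p - 1))) * (ε ^ p + ‖y - x0‖ ^ (p / (p - 1))) ^ (-(((((N:ℝ) - p) / p) + 1) * (p - 1)))) • (y - x0) : EuclideanSpace ℝ (Fin N)) i) x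
                  (EuclideanSpace.single i 1)
                = ⟪((((-((C0 * (((N:ℝ) - p) / p) * (p / (p - 1))) ^ (p - 1))) * (ε ^ p + ‖x - x0‖ ^ (p / (p - 1))) ^ (-(((((N:ℝ) - p) / p) + 1) * (p - 1)))) • ContinuousLinearMap.id ℝ (EuclideanSpace ℝ (Fin N)) + ((InnerProductSpace.toDual ℝ (EuclideanSpace ℝ (Fin N))) (((-((C0 * (((N:ℝ) - p) / p) * (p / (p - 1))) ^ (p - 1))) * (-(((((N:ℝ) - p) / p) + 1) * (p - 1)) * (ε ^ p + ‖x - x0‖ ^ (p / (p - 1))) ^ (-(((((N:ℝ) - p) / p) + 1) * (p - 1)) - 1)) * (p / (p - 1))) • (‖x - x0‖ ^ ((p / (p - 1)) - 2) • (x - x0)))).smulRight (x - x0))) (EuclideanSpace.single i 1), EuclideanSpace.single i 1⟫ := by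
              intro i
              rw [(hDi x i).fderiv]
              rw [ContinuousLinearMap.comp_apply, PiLp.proj_apply, ← inner_single_one
                (((((-((C0 * (((N:ℝ) - p) / p) * (p / (p - 1))) ^ (p - 1))) * (ε ^ p + ‖x - x0‖ ^ (p / (p - 1))) ^ (-(((((N:ℝ) - p) / p) + 1) * (p - 1)))) • ContinuousLinearMap.id ℝ (EuclideanSpace ℝ (Fin N)) + ((InnerProductSpace.toDual ℝ (EuclideanSpace ℝ (Fin N))) (((-((C0 * (((N:ℝ) - p) / p) * (p / (p - 1))) ^ (p - 1))) * (-(((((N:ℝ) - p) / p) + 1) * (p - 1)) * (ε ^ p + ‖x - x0‖ ^ (p / (p - 1))) ^ (-(((((N:ℝ) - p) / p) + 1) * (p - 1)) - 1)) * (p / (p - 1))) • (‖x - x0‖ ^ ((p / (p - 1)) - 2) • (x - x0)))).smulRight (x - x0))) (EuclideanSpace.single i 1)) i]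
            rw [Finset.sum_congr rfl fun i _ => h1 i]
            exact hdivkey x
          rw [← Finset.sum_mul, hSx]
          ring

/-- The regularized fundamental solution `Γ_ε(x) = C₀ (ε^p + |x−x₀|^{p/(p−1)})^{−(N−p)/p}` is
`C¹` on `ℝ^N`, the field `|∇Γ_ε|^{p−2}∇Γ_ε` is `C¹` away from `x₀`, and
`−Δ_p Γ_ε = f_ε` with `f_ε(x) = C₀^{p−1} C₁^{p²/(N−p)} ε^p
(ε^p + |x−x₀|^{p/(p−1)})^{−(N−(N−p)/p)}`, both pointwise and in the weak sense. -/
theorem regularized_fundamental_solution (N : ℕ) (hN : 2 ≤ N) (p : ℝ)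
    (hp2 : 2 ≤ p) (hpN : p < N) (x0 : EuclideanSpace ℝ (Fin N)) (ε : ℝ) (hε : 0 < ε) :
    let ωN : ℝ := (volume (Metric.ball (0 : EuclideanSpace ℝ (Fin N)) 1)).toReal
    let C0 : ℝ := ((p - 1) / ((N : ℝ) - p)) * ((N : ℝ) * ωN) ^ (-(1 : ℝ) / (p - 1))
    let C1 : ℝ := (N : ℝ) ^ (((N : ℝ) - p) / p ^ 2) *
      (((N : ℝ) - p) / (p - 1)) ^ ((p - 1) * ((N : ℝ) - p) / p ^ 2)
    let Γε : EuclideanSpace ℝ (Fin N) → ℝ :=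
      fun x => C0 * (ε ^ p + ‖x - x0‖ ^ (p / (p - 1))) ^ (-(((N : ℝ) - p) / p))
    let fε : EuclideanSpace ℝ (Fin N) → ℝ :=
      fun x => C0 ^ (p - 1) * C1 ^ (p ^ 2 / ((N : ℝ) - p)) * ε ^ p *
        (ε ^ p + ‖x - x0‖ ^ (p / (p - 1))) ^ (-((N : ℝ) - ((N : ℝ) - p) / p))
    ContDiff ℝ 1 Γε ∧
    ContDiffOn ℝ 1 (fun x => (‖gradient Γε x‖ ^ (p - 2)) • gradient Γε x) {x0}ᶜ ∧
    (∀ x : EuclideanSpace ℝ (Fin N), x ≠ x0 →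
      -vecDiv (fun z => (‖gradient Γε z‖ ^ (p - 2)) • gradient Γε z) x = fε x) ∧
    ∀ φ : EuclideanSpace ℝ (Fin N) → ℝ, ContDiff ℝ (⊤ : ℕ∞) φ → HasCompactSupport φ →
      (∫ x, (‖gradient Γε x‖ ^ (p - 2)) * ⟪gradient Γε x, gradient φ x⟫)
        = ∫ x, fε x * φ x := by
  intro ωN C0 C1
  have hp0 : (0:ℝ) < p := by linarith
  have hN0 : (0:ℝ) < (N:ℝ) := by linarith
  have hNp : (0:ℝ) < (N:ℝ) - p := by linarith
  have hωN : (0:ℝ) < ωN :=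
    ENNReal.toReal_pos (Metric.measure_ball_pos volume 0 one_pos).ne' measure_ball_lt_top.ne
  have hC0 : 0 < C0 :=
    mul_pos (div_pos (by linarith) hNp) (Real.rpow_pos_of_pos (mul_pos hN0 hωN) _)
  have hdnn : (0:ℝ) ≤ ((N:ℝ) - p) / (p - 1) := div_nonneg hNp.le (by linarith)
  have hC1 : C1 ^ (p ^ 2 / ((N:ℝ) - p)) = (N:ℝ) * ((((N:ℝ) - p) / (p - 1)) ^ (p - 1)) := by
    have e1 : (((N:ℝ) - p) / p ^ 2) * (p ^ 2 / ((N:ℝ) - p)) = 1 := by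
      field_simp
    have e2 : ((p - 1) * ((N:ℝ) - p) / p ^ 2) * (p ^ 2 / ((N:ℝ) - p)) = p - 1 := by
      field_simp; try ring
    show ((N : ℝ) ^ (((N : ℝ) - p) / p ^ 2) *
      (((N : ℝ) - p) / (p - 1)) ^ ((p - 1) * ((N : ℝ) - p) / p ^ 2)) ^ (p ^ 2 / ((N:ℝ) - p)) = _
    rw [Real.mul_rpow (Real.rpow_nonneg hN0.le _) (Real.rpow_nonneg hdnn _),
      ← Real.rpow_mul hN0.le, ← Real.rpow_mul hdnn, e1, e2, Real.rpow_one]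
  exact key N hN p hp2 hpN x0 ε hε C0 C1 hC0 hC1


end
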